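/- Let R be a commutative ring, (M,λ) a formed space over R, g ≥ 0, and f : H^{⊕g} → (M,λ) a morphism of formed spaces. Then f is injective, M = f(H^{⊕g}) ⊕ W as R-modules where W = {m ∈ M : λ(f(x), m) = 0 for all x ∈ H^{⊕g}}, the two summands are λ-orthogonal, and (M,λ) is isomorphic as a formed space to the orthogonal direct sum H^{⊕g} ⊕ (W, λ restricted to W). -/

import Mathlib

/-- The standard symplectic form on `R^n` (interleaved hyperbolic pairs), i.e. the form of the
hyperbolic formed space `H^{⊕ g}` when `n = 2g`. -/
def omegaH (R : Type) [CommRing R] (n : ℕ) (x y : Fin n → R) : R :=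
  ∑ i : Fin n, ∑ j : Fin n, (if (i : ℕ) % 2 = 0 ∧ (j : ℕ) = (i : ℕ) + 1 then x i * y j
    else if (j : ℕ) % 2 = 0 ∧ (i : ℕ) = (j : ℕ) + 1 then -(x i * y j) else 0)

namespace HypAux

/-- The "partner" index: `i+1` for even `i`, `i-1` for odd `i`. -/
def pr (g : ℕ) (i : Fin (2 * g)) : Fin (2 * g) :=
  if _h : (i : ℕ) % 2 = 0 then ⟨(i : ℕ) + 1, by have := i.isLt; omega⟩
  else ⟨(i : ℕ) - 1, by have := i.isLt; omega⟩

lemma pr_val_even {g : ℕ} {i : Fin (2 * g)} (h : (i : ℕ) % 2 = 0) :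
    (pr g i : ℕ) = (i : ℕ) + 1 := by simp [pr, h]

lemma pr_val_odd {g : ℕ} {i : Fin (2 * g)} (h : ¬ (i : ℕ) % 2 = 0) :
    (pr g i : ℕ) = (i : ℕ) - 1 := by simp [pr, h]

lemma pr_pr {g : ℕ} (i : Fin (2 * g)) : pr g (pr g i) = i := by
  apply Fin.ext
  by_cases h : (i : ℕ) % 2 = 0
  · have h1 := pr_val_even (g := g) h
    have h2 : ¬ ((pr g i : ℕ)) % 2 = 0 := by omega
    rw [pr_val_odd h2]; omega
  · have h1 := pr_val_odd (g := g) h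
    have h2 : ((pr g i : ℕ)) % 2 = 0 := by omega
    rw [pr_val_even h2]; omega

lemma omegaH_eq (R : Type) [CommRing R] (g : ℕ) (x y : Fin (2 * g) → R) :
    omegaH R (2 * g) x y =
      ∑ i : Fin (2 * g), if (i : ℕ) % 2 = 0 then x i * y (pr g i)
        else -(x i * y (pr g i)) := by
  unfold omegaH
  refine Finset.sum_congr rfl fun i _ => ?_
  by_cases hi : (i : ℕ) % 2 = 0
  · rw [Finset.sum_eq_single (pr g i)]
    · rw [if_pos ⟨hi, pr_val_even hi⟩, if_pos hi]
    · intro k _ hk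
      have hkv : (k : ℕ) ≠ (i : ℕ) + 1 := by
        intro h
        exact hk (Fin.ext (by rw [pr_val_even hi]; omega))
      rw [if_neg, if_neg]
      · rintro ⟨hk2, hik⟩; omega
      · rintro ⟨_, h⟩; exact hkv h
    · intro h; exact absurd (Finset.mem_univ _) h
  · rw [Finset.sum_eq_single (pr g i)]
    · rw [if_neg, if_pos, if_neg hi]
      · refine ⟨by rw [pr_val_odd hi]; omega, by rw [pr_val_odd hi]; omega⟩
      · rintro ⟨h, _⟩; exact hi h
    · intro k _ hk
      rw [if_neg, if_neg]
      · rintro ⟨hk2, hik⟩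
        exact hk (Fin.ext (by rw [pr_val_odd hi]; omega))
      · rintro ⟨h, _⟩; exact hi h
    · intro h; exact absurd (Finset.mem_univ _) h

lemma omegaH_single (R : Type) [CommRing R] (g : ℕ) (j : Fin (2 * g))
    (y : Fin (2 * g) → R) :
    omegaH R (2 * g) (Pi.single j 1) y =
      if (j : ℕ) % 2 = 0 then y (pr g j) else -(y (pr g j)) := by
  classical
  rw [omegaH_eq, Finset.sum_eq_single j]
  · simp
  · intro k _ hk
    rw [Pi.single_eq_of_ne hk]
    split_ifs <;> simp
  · intro h; exact absurd (Finset.mem_univ _) h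

end HypAux

/-- any morphism of formed spaces `H^{⊕ g} → (M, λ)` is injective, splits off
an orthogonal complement `W`, and exhibits `(M, λ)` as the orthogonal direct sum of `H^{⊕ g}`
and `(W, λ|_W)`. -/
theorem hyperbolic_splitting
    (R : Type) [CommRing R]
    (M : Type) [AddCommGroup M] [Module R M] [Module.Finite R M] [Module.Free R M]
    (lam : M →ₗ[R] M →ₗ[R] R) (halt : ∀ v : M, lam v v = 0)
    (g : ℕ) (f : (Fin (2 * g) → R) →ₗ[R] M)
    (hf : ∀ x y, lam (f x) (f y) = omegaH R (2 * g) x y)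
    (W : Submodule R M) (hW : ∀ m : M, m ∈ W ↔ ∀ x, lam (f x) m = 0) :
    Function.Injective f ∧
    IsCompl (LinearMap.range f) W ∧
    (∀ x, ∀ w ∈ W, lam (f x) w = 0 ∧ lam w (f x) = 0) ∧
    ∃ e : M ≃ₗ[R] (Fin (2 * g) → R) × W,
      ∀ m m' : M, lam m m' =
        omegaH R (2 * g) (e m).1 (e m').1 + lam ((e m).2 : M) ((e m').2 : M) := by
  classical
  -- skew-symmetry
  have hskew : ∀ v w : M, lam w v = - lam v w := by
    intro v w
    have h := halt (v + w)
    simp only [map_add, LinearMap.add_apply, halt, zero_add, add_zero] at h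
    linear_combination h
  -- the projection onto the coordinates of `H^{⊕ g}`
  set π : M →ₗ[R] (Fin (2 * g) → R) :=
    LinearMap.pi fun i => (if (i : ℕ) % 2 = 0 then (-1 : R) else 1) •
      (lam (f (Pi.single (HypAux.pr g i) 1))) with hπ
  have hπ_apply : ∀ (m : M) (i : Fin (2 * g)), π m i =
      (if (i : ℕ) % 2 = 0 then (-1 : R) else 1) *
        lam (f (Pi.single (HypAux.pr g i) 1)) m := by
    intro m i
    simp only [hπ, LinearMap.pi_apply, LinearMap.smul_apply, smul_eq_mul]
  have hπf : ∀ x, π (f x) = x := by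
    intro x
    funext i
    rw [hπ_apply, hf, HypAux.omegaH_single]
    by_cases hi : (i : ℕ) % 2 = 0
    · have h2 : ¬ ((HypAux.pr g i : ℕ)) % 2 = 0 := by
        have := HypAux.pr_val_even (g := g) hi; omega
      rw [if_neg h2, if_pos hi, HypAux.pr_pr]; ring
    · have h2 : ((HypAux.pr g i : ℕ)) % 2 = 0 := by
        have := HypAux.pr_val_odd (g := g) hi; omega
      rw [if_pos h2, if_neg hi, HypAux.pr_pr]; ring
  -- expansion of `lam (f x) m` in coordinates
  have hsum : ∀ x : Fin (2 * g) → R, x = ∑ j, x j • (Pi.single j (1 : R) : Fin (2 * g) → R) := by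
    intro x
    conv_lhs => rw [← Finset.univ_sum_single x]
    refine Finset.sum_congr rfl fun j _ => ?_
    rw [← Pi.single_smul, smul_eq_mul, mul_one]
  have hexp : ∀ (x : Fin (2 * g) → R) (m : M),
      lam (f x) m = ∑ j, x j * lam (f ((Pi.single j (1 : R) : Fin (2 * g) → R))) m := by
    intro x m
    conv_lhs => rw [hsum x]
    rw [map_sum, map_sum, LinearMap.sum_apply]
    refine Finset.sum_congr rfl fun j _ => ?_
    rw [map_smul, map_smul, LinearMap.smul_apply, smul_eq_mul]
  -- `W` is the kernel of `π`
  have hπW : ∀ m : M, m ∈ W ↔ π m = 0 := by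
    intro m
    rw [hW]
    constructor
    · intro h
      funext i
      rw [hπ_apply, h, mul_zero]; rfl
    · intro h x
      rw [hexp]
      refine Finset.sum_eq_zero fun j _ => ?_
      have h1 := congrFun h (HypAux.pr g j)
      rw [hπ_apply, HypAux.pr_pr] at h1
      have h1' : (if ((HypAux.pr g j : ℕ)) % 2 = 0 then (-1 : R) else 1) *
          lam (f (Pi.single j 1)) m = 0 := h1
      have hj : lam (f (Pi.single j 1)) m = 0 := by
        by_cases hpj : ((HypAux.pr g j : ℕ)) % 2 = 0
        · rw [if_pos hpj, neg_one_mul] at h1'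
          exact neg_eq_zero.mp h1'
        · rw [if_neg hpj, one_mul] at h1'
          exact h1'
      rw [hj, mul_zero]
  have hmemW : ∀ m : M, m - f (π m) ∈ W := by
    intro m
    rw [hπW, map_sub, hπf, sub_self]
  have hinj : Function.Injective f := Function.LeftInverse.injective hπf
  have hcompl : IsCompl (LinearMap.range f) W := by
    constructor
    · rw [Submodule.disjoint_def]
      intro m hm hmW
      obtain ⟨x, rfl⟩ := hm
      have h := hπf x
      rw [(hπW _).mp hmW] at h
      rw [← h, map_zero]
    · rw [codisjoint_iff, eq_top_iff]
      intro m _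
      have hdm : m = f (π m) + (m - f (π m)) := by abel
      rw [hdm]
      exact Submodule.add_mem_sup ⟨π m, rfl⟩ (hmemW m)
  have horth : ∀ x, ∀ w ∈ W, lam (f x) w = 0 ∧ lam w (f x) = 0 := by
    intro x w hw
    have h1 : lam (f x) w = 0 := (hW w).mp hw x
    exact ⟨h1, by rw [hskew (f x) w, h1, neg_zero]⟩
  refine ⟨hinj, hcompl, horth, ?_⟩
  -- the linear equivalence
  set ρ : M →ₗ[R] W := LinearMap.codRestrict W (LinearMap.id - f ∘ₗ π)
    (fun m => by simpa using hmemW m) with hρ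
  have hρ_apply : ∀ m : M, (ρ m : M) = m - f (π m) := by
    intro m; simp [hρ, LinearMap.codRestrict]
  set e₁ : M →ₗ[R] (Fin (2 * g) → R) × W := π.prod ρ with he₁
  set e₂ : ((Fin (2 * g) → R) × W) →ₗ[R] M :=
    f ∘ₗ LinearMap.fst R (Fin (2 * g) → R) W +
      W.subtype ∘ₗ LinearMap.snd R (Fin (2 * g) → R) W with he₂
  have h21 : e₂ ∘ₗ e₁ = LinearMap.id := by
    apply LinearMap.ext
    intro m
    simp only [he₁, he₂, LinearMap.comp_apply, LinearMap.prod_apply, Function.prod,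
      LinearMap.add_apply, LinearMap.fst_apply, LinearMap.snd_apply,
      Submodule.coe_subtype, LinearMap.id_apply]
    rw [hρ_apply]
    abel
  have h12 : e₁ ∘ₗ e₂ = LinearMap.id := by
    apply LinearMap.ext
    intro p
    obtain ⟨x, w⟩ := p
    have hπw : π (w : M) = 0 := (hπW _).mp w.2
    simp only [he₁, he₂, LinearMap.comp_apply, LinearMap.prod_apply, Function.prod,
      LinearMap.add_apply, LinearMap.fst_apply, LinearMap.snd_apply,
      Submodule.coe_subtype, LinearMap.id_apply]
    refine Prod.ext ?_ ?_
    · show π (f x + (w : M)) = x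
      rw [map_add, hπf, hπw, add_zero]
    · show ρ (f x + (w : M)) = w
      apply Subtype.ext
      rw [hρ_apply, map_add, hπf, hπw, add_zero]
      abel
  set e : M ≃ₗ[R] (Fin (2 * g) → R) × W := LinearEquiv.ofLinear e₁ e₂ h12 h21 with he
  refine ⟨e, ?_⟩
  intro m m'
  have hem : ∀ a : M, e a = (π a, ρ a) := fun a => by
    rw [he, LinearEquiv.ofLinear_apply, he₁, LinearMap.prod_apply]; rfl
  have h1 : (e m).1 = π m := by rw [hem]
  have h1' : (e m').1 = π m' := by rw [hem]
  have h2 : ((e m).2 : M) = m - f (π m) := by rw [hem]; exact hρ_apply m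
  have h2' : ((e m').2 : M) = m' - f (π m') := by rw [hem]; exact hρ_apply m'
  rw [h1, h1', h2, h2']
  have hw := (hW _).mp (hmemW m)
  have hw' := (hW _).mp (hmemW m')
  have hdm : m = f (π m) + (m - f (π m)) := by abel
  have hdm' : m' = f (π m') + (m' - f (π m')) := by abel
  conv_lhs => rw [hdm, hdm']
  simp only [map_add, LinearMap.add_apply]
  rw [hf, hw' (π m), hskew (f (π m')) (m - f (π m)), hw (π m')]
  ring
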